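/- Let f : I → ℝ be continuous on I and C¹ on int I. Then f' is convex on int I if and only if (f(b)-f(a))/(b-a) ≤ (1/2)((f'(a)+f'(b))/2 + f'((a+b)/2)) for all a < b in int I. -/

import Mathlib

open Set intervalIntegral MeasureTheory



lemma trap_le {w : ℝ → ℝ} {a b : ℝ} (hab : a ≤ b)
    (hw : ConvexOn ℝ (Icc a b) w) (hc : ContinuousOn w (Icc a b)) :
    ∫ t in a..b, w t ≤ (b - a) * (w a + w b) / 2 := by
  rcases eq_or_lt_of_le hab with rfl | hab
  · simp
  have hba : (0:ℝ) < b - a := by linarith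
  have key : ∀ t ∈ Icc a b, w t ≤ (b*w a - a*w b)/(b-a) + ((w b - w a)/(b-a)) * t := by
    intro t ht
    have h1 : (0:ℝ) ≤ (b - t)/(b-a) := by
      apply div_nonneg <;> [skip; linarith]
      linarith [ht.2]
    have h2 : (0:ℝ) ≤ (t - a)/(b-a) := by
      apply div_nonneg <;> [skip; linarith]
      linarith [ht.1]
    have h3 : (b - t)/(b-a) + (t - a)/(b-a) = 1 := by field_simp; ring
    have h4 : ((b - t)/(b-a)) • a + ((t - a)/(b-a)) • b = t := by
      rw [smul_eq_mul, smul_eq_mul]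
      field_simp
      ring
    have := hw.2 (left_mem_Icc.2 hab.le) (right_mem_Icc.2 hab.le) h1 h2 h3
    rw [h4] at this
    calc w t ≤ ((b - t)/(b-a)) • w a + ((t - a)/(b-a)) • w b := this
      _ = (b*w a - a*w b)/(b-a) + ((w b - w a)/(b-a)) * t := by
          simp only [smul_eq_mul]; field_simp; ring
  have hint : ∫ t in a..b, w t ≤ ∫ t in a..b, ((b*w a - a*w b)/(b-a) + ((w b - w a)/(b-a)) * t) := by
    apply integral_mono_on hab.le
    · exact hc.intervalIntegrable_of_Icc hab.le
    · apply IntervalIntegrable.add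
      · exact intervalIntegrable_const
      · exact (intervalIntegrable_id.const_mul _)
    · exact key
  refine hint.trans_eq ?_
  rw [integral_add intervalIntegrable_const (intervalIntegrable_id.const_mul _),
    intervalIntegral.integral_const, intervalIntegral.integral_const_mul, integral_id]
  rw [smul_eq_mul]
  field_simp
  ring

lemma quad_le {w : ℝ → ℝ} {a b : ℝ} (hab : a ≤ b)
    (hw : ConvexOn ℝ (Icc a b) w) (hc : ContinuousOn w (Icc a b)) :
    ∫ t in a..b, w t ≤ (b - a) * ((w a + w b)/4 + w ((a+b)/2)/2) := by
  set m := (a+b)/2 with hm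
  have ham : a ≤ m := by simp [hm]; linarith
  have hmb : m ≤ b := by simp [hm]; linarith
  have hs1 : Icc a m ⊆ Icc a b := Icc_subset_Icc le_rfl hmb
  have hs2 : Icc m b ⊆ Icc a b := Icc_subset_Icc ham le_rfl
  have t1 := trap_le ham (hw.subset hs1 (convex_Icc _ _)) (hc.mono hs1)
  have t2 := trap_le hmb (hw.subset hs2 (convex_Icc _ _)) (hc.mono hs2)
  have hsplit : (∫ t in a..m, w t) + ∫ t in m..b, w t = ∫ t in a..b, w t := by
    apply integral_add_adjacent_intervals
    · exact (hc.mono hs1).intervalIntegrable_of_Icc ham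
    · exact (hc.mono hs2).intervalIntegrable_of_Icc hmb
  have hma : m - a = (b-a)/2 := by rw [hm]; ring
  have hbm : b - m = (b-a)/2 := by rw [hm]; ring
  rw [← hsplit]
  rw [hma] at t1; rw [hbm] at t2
  linarith

lemma chord_of_midsmall {w : ℝ → ℝ} {x y ρ₀ : ℝ} (hρ₀ : 0 < ρ₀)
    (hc : ContinuousOn w (Icc x y))
    (hmid : ∀ t ρ, 0 < ρ → ρ ≤ ρ₀ → x ≤ t - ρ → t + ρ ≤ y → 2 * w t ≤ w (t-ρ) + w (t+ρ)) :
    ∀ u v, x ≤ u → v ≤ y → u < v → ∀ z ∈ Icc u v,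
      (v - u) * w z ≤ (v - z) * w u + (z - u) * w v := by
  intro u v hxu hvy huv z hz
  by_contra hcon
  push_neg at hcon
  set p : ℝ → ℝ := fun t => (v - u) * w t - (v - t) * w u - (t - u) * w v with hp
  have hicc : Icc u v ⊆ Icc x y := Icc_subset_Icc hxu hvy
  have hwc : ContinuousOn w (Icc u v) := hc.mono hicc
  have hpc : ContinuousOn p (Icc u v) := by
    apply ContinuousOn.sub; apply ContinuousOn.sub
    · exact ContinuousOn.mul continuousOn_const hwc
    · fun_prop
    · fun_prop
  have hne : (Icc u v).Nonempty := ⟨u, left_mem_Icc.2 huv.le⟩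
  obtain ⟨c0, hc0m, hc0max⟩ := isCompact_Icc.exists_isMaxOn hne hpc
  set M := p c0 with hM
  have hMpos : 0 < M := by
    have h1 := hc0max hz
    have hzgt : 0 < p z := by simp only [hp]; linarith
    simpa only [hM] using lt_of_lt_of_le hzgt h1
  set S := Icc u v ∩ p ⁻¹' {M} with hS
  have hSne : S.Nonempty := ⟨c0, hc0m, rfl⟩
  have hScl : IsClosed S := hpc.preimage_isClosed_of_isClosed isClosed_Icc isClosed_singleton
  have hSc : IsCompact S := isCompact_Icc.of_isClosed_subset hScl inter_subset_left
  have hSbdd : BddAbove S := hSc.bddAbove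
  have hcS : sSup S ∈ S := hSc.sSup_mem hSne
  set c := sSup S with hcdef
  obtain ⟨hcI, hcM⟩ := hcS
  have hpu : p u = 0 := by simp only [hp]; ring
  have hpv : p v = 0 := by simp only [hp]; ring
  have hcu : u < c := by
    rcases eq_or_lt_of_le hcI.1 with h | h
    · exfalso; rw [mem_preimage, mem_singleton_iff] at hcM
      rw [show c = u from h.symm] at hcM; rw [hcM] at hpu; linarith
    · exact h
  have hcv : c < v := by
    rcases eq_or_lt_of_le hcI.2 with h | h
    · exfalso; rw [mem_preimage, mem_singleton_iff] at hcM
      rw [show c = v from h] at hcM; rw [hcM] at hpv; linarith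
    · exact h
  set ρ := min ρ₀ (min (c - u) (v - c)) / 2 with hρ
  have hρpos : 0 < ρ := by
    apply div_pos _ two_pos
    exact lt_min hρ₀ (lt_min (by linarith) (by linarith))
  have hρ1 : ρ ≤ ρ₀ := by
    have : min ρ₀ (min (c - u) (v - c)) ≤ ρ₀ := min_le_left _ _
    simp only [hρ]; linarith
  have hρ2 : u ≤ c - ρ := by
    have h1 : min ρ₀ (min (c - u) (v - c)) ≤ c - u := (min_le_right _ _).trans (min_le_left _ _)
    simp only [hρ]; linarith
  have hρ3 : c + ρ ≤ v := by
    have h1 : min ρ₀ (min (c - u) (v - c)) ≤ v - c := (min_le_right _ _).trans (min_le_right _ _)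
    simp only [hρ]; linarith
  -- midpoint inequality for p at c
  have hmidp : 2 * p c ≤ p (c - ρ) + p (c + ρ) := by
    have := hmid c ρ hρpos hρ1 (by linarith) (by linarith)
    simp only [hp]; nlinarith [this]
  have hMc : p c = M := by rwa [mem_preimage, mem_singleton_iff] at hcM
  have hle1 : p (c - ρ) ≤ M := hc0max ⟨by linarith, by linarith⟩
  have hle2 : p (c + ρ) ≤ M := hc0max ⟨by linarith, by linarith⟩
  have hge : M ≤ p (c + ρ) := by rw [← hMc] at hle1 ⊢; linarith [hmidp]
  have hmem : c + ρ ∈ S := ⟨⟨by linarith, by linarith⟩, by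
    rw [mem_preimage, mem_singleton_iff]; linarith⟩
  have : c + ρ ≤ c := le_csSup hSbdd hmem
  linarith

lemma level_up {P q : ℝ → ℝ} {a b ρ : ℝ} (hρ : 0 < ρ) (hab : a + ρ < b)
    (hPc : ContinuousOn P (Ioo a b)) (hqc : ContinuousOn q (Ioo a b))
    (hPd : ∀ t ∈ Ioo a b, HasDerivAt P (q t) t)
    (hstar : ∀ u v, u ∈ Ioo a b → v ∈ Ioo a b → u ≤ v →
      P v - P u ≤ (v - u) * ((q u + q v)/4 + q ((u+v)/2)/2)) :
    (∀ t ∈ Ioo (a+ρ/2) (b-ρ/2), HasDerivAt (fun t => (∫ s in (t-ρ/2)..(t+ρ/2), P s)/ρ)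
        ((P (t+ρ/2) - P (t-ρ/2))/ρ) t) ∧
    ContinuousOn (fun t => (∫ s in (t-ρ/2)..(t+ρ/2), P s)/ρ) (Ioo (a+ρ/2) (b-ρ/2)) ∧
    ContinuousOn (fun t => (P (t+ρ/2) - P (t-ρ/2))/ρ) (Ioo (a+ρ/2) (b-ρ/2)) ∧
    (∀ u v, u ∈ Ioo (a+ρ/2) (b-ρ/2) → v ∈ Ioo (a+ρ/2) (b-ρ/2) → u ≤ v →
      (∫ s in (v-ρ/2)..(v+ρ/2), P s)/ρ - (∫ s in (u-ρ/2)..(u+ρ/2), P s)/ρ ≤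
      (v - u) * (((P (u+ρ/2) - P (u-ρ/2))/ρ + (P (v+ρ/2) - P (v-ρ/2))/ρ)/4 +
        ((P ((u+v)/2+ρ/2) - P ((u+v)/2-ρ/2))/ρ)/2)) := by
  have hρ2 : -(ρ/2) ≤ ρ/2 := by linarith
  -- continuity of shifted compositions
  have hcomp : ∀ (G : ℝ → ℝ), ContinuousOn G (Ioo a b) → ∀ t, a < t - ρ/2 → t + ρ/2 < b →
      ContinuousOn (fun s => G (t + s)) (Icc (-(ρ/2)) (ρ/2)) := by
    intro G hG t h1 h2
    apply hG.comp ((continuous_const.add continuous_id).continuousOn)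
    intro s hs
    simp only [Pi.add_apply, id_eq]
    exact ⟨by linarith [hs.1], by linarith [hs.2]⟩
  have hcompInt : ∀ (G : ℝ → ℝ), ContinuousOn G (Ioo a b) → ∀ t, a < t - ρ/2 → t + ρ/2 < b →
      IntervalIntegrable (fun s => G (t + s)) volume (-(ρ/2)) (ρ/2) := by
    intro G hG t h1 h2
    apply ContinuousOn.intervalIntegrable
    rw [uIcc_of_le hρ2]
    exact hcomp G hG t h1 h2
  -- FTC for q over shifted windows
  have hFTC : ∀ t, a < t - ρ/2 → t + ρ/2 < b →
      (∫ s in (-(ρ/2))..(ρ/2), q (t + s)) = P (t+ρ/2) - P (t-ρ/2) := by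
    intro t h1 h2
    rw [integral_comp_add_left q, show t + -(ρ/2) = t - ρ/2 by ring]
    apply integral_eq_sub_of_hasDerivAt
    · intro x hx
      rw [uIcc_of_le (by linarith : t - ρ/2 ≤ t + ρ/2)] at hx
      exact hPd x ⟨by linarith [hx.1], by linarith [hx.2]⟩
    · apply ContinuousOn.intervalIntegrable
      apply hqc.mono
      rw [uIcc_of_le (by linarith : t - ρ/2 ≤ t + ρ/2)]
      intro x hx
      exact ⟨by linarith [hx.1], by linarith [hx.2]⟩
  have hIrepr : ∀ t, a < t - ρ/2 → t + ρ/2 < b →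
      (∫ s in (t-ρ/2)..(t+ρ/2), P s) = ∫ s in (-(ρ/2))..(ρ/2), P (t + s) := by
    intro t h1 h2
    rw [integral_comp_add_left P, show t + -(ρ/2) = t - ρ/2 by ring]
  -- antiderivative H of P with base point
  set c0 := (a+b)/2 with hc0
  have hc0m : c0 ∈ Ioo a b := ⟨by simp [hc0]; linarith, by simp [hc0]; linarith⟩
  have hPint : ∀ y z, y ∈ Ioo a b → z ∈ Ioo a b → IntervalIntegrable P volume y z := by
    intro y z hy hz
    apply ContinuousOn.intervalIntegrable
    apply hPc.mono
    rw [uIcc]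
    intro x hx
    exact ⟨lt_of_lt_of_le (lt_min hy.1 hz.1) hx.1, lt_of_le_of_lt hx.2 (max_lt hy.2 hz.2)⟩
  have hHd : ∀ y ∈ Ioo a b, HasDerivAt (fun u => ∫ x in c0..u, P x) (P y) y := by
    intro y hy
    apply integral_hasDerivAt_right (hPint c0 y hc0m hy)
    · exact hPc.stronglyMeasurableAtFilter isOpen_Ioo y hy
    · exact hPc.continuousAt (isOpen_Ioo.mem_nhds hy)
  set H : ℝ → ℝ := fun u => ∫ x in c0..u, P x with hH
  have hrepr : ∀ t, a < t - ρ/2 → t + ρ/2 < b →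
      (∫ s in (t-ρ/2)..(t+ρ/2), P s) = H (t+ρ/2) - H (t-ρ/2) := by
    intro t h1 h2
    rw [hH]
    rw [← integral_interval_sub_left (hPint c0 (t+ρ/2) hc0m ⟨by linarith, h2⟩)
        (hPint c0 (t-ρ/2) hc0m ⟨h1, by linarith⟩)]
  -- derivative of moving average
  have hAPd : ∀ t ∈ Ioo (a+ρ/2) (b-ρ/2), HasDerivAt (fun t => (∫ s in (t-ρ/2)..(t+ρ/2), P s)/ρ)
      ((P (t+ρ/2) - P (t-ρ/2))/ρ) t := by
    intro t ht
    have h1 : a < t - ρ/2 := by linarith [ht.1]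
    have h2 : t + ρ/2 < b := by linarith [ht.2]
    have hd : HasDerivAt (fun t => (H (t+ρ/2) - H (t-ρ/2))/ρ) ((P (t+ρ/2) - P (t-ρ/2))/ρ) t := by
      apply HasDerivAt.div_const
      apply HasDerivAt.sub
      · exact HasDerivAt.comp_add_const t (ρ/2) (hHd (t+ρ/2) ⟨by linarith, h2⟩)
      · exact HasDerivAt.comp_sub_const t (ρ/2) (hHd (t-ρ/2) ⟨h1, by linarith⟩)
    apply hd.congr_of_eventuallyEq
    filter_upwards [isOpen_Ioo.mem_nhds ht] with y hy
    rw [hrepr y (by linarith [hy.1]) (by linarith [hy.2])]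
  refine ⟨hAPd, fun t ht => ((hAPd t ht).continuousAt).continuousWithinAt, ?_, ?_⟩
  · -- continuity of Aq
    apply ContinuousOn.div_const
    apply ContinuousOn.sub
    · apply hPc.comp ((continuous_id.add continuous_const).continuousOn)
      intro t ht; simp only [Pi.add_apply, Pi.sub_apply, id_eq]; exact ⟨by linarith [ht.1], by linarith [ht.2]⟩
    · apply hPc.comp ((continuous_id.sub continuous_const).continuousOn)
      intro t ht; simp only [Pi.add_apply, Pi.sub_apply, id_eq]; exact ⟨by linarith [ht.1], by linarith [ht.2]⟩
  · -- the star inequality transfers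
    intro u v hu hv huv
    have hu1 : a < u - ρ/2 := by linarith [hu.1]
    have hu2 : u + ρ/2 < b := by linarith [hu.2]
    have hv1 : a < v - ρ/2 := by linarith [hv.1]
    have hv2 : v + ρ/2 < b := by linarith [hv.2]
    have hm1 : a < (u+v)/2 - ρ/2 := by linarith
    have hm2 : (u+v)/2 + ρ/2 < b := by linarith
    have key : (∫ s in (v-ρ/2)..(v+ρ/2), P s) - (∫ s in (u-ρ/2)..(u+ρ/2), P s) ≤
        (v - u) * (((∫ s in (-(ρ/2))..(ρ/2), q (u+s)) + ∫ s in (-(ρ/2))..(ρ/2), q (v+s))/4 +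
          (∫ s in (-(ρ/2))..(ρ/2), q ((u+v)/2+s))/2) := by
      rw [hIrepr u hu1 hu2, hIrepr v hv1 hv2,
        ← integral_sub (hcompInt P hPc v hv1 hv2) (hcompInt P hPc u hu1 hu2)]
      have step : (∫ s in (-(ρ/2))..(ρ/2), (P (v+s) - P (u+s))) ≤
          ∫ s in (-(ρ/2))..(ρ/2), (v - u) * ((q (u+s) + q (v+s))/4 + q ((u+v)/2+s)/2) := by
        apply integral_mono_on hρ2
        · exact (hcompInt P hPc v hv1 hv2).sub (hcompInt P hPc u hu1 hu2)
        · apply IntervalIntegrable.const_mul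
          apply IntervalIntegrable.add
          · exact (((hcompInt q hqc u hu1 hu2).add (hcompInt q hqc v hv1 hv2))).div_const _
          · exact (hcompInt q hqc ((u+v)/2) hm1 hm2).div_const _
        · intro s hs
          have h := hstar (u+s) (v+s) ⟨by linarith [hs.1], by linarith [hs.2]⟩
            ⟨by linarith [hs.1], by linarith [hs.2]⟩ (by linarith)
          rw [show (u+s+(v+s))/2 = (u+v)/2 + s by ring] at h
          calc P (v+s) - P (u+s) ≤ (v+s-(u+s)) * ((q (u+s) + q (v+s))/4 + q ((u+v)/2+s)/2) := h
            _ = (v - u) * ((q (u+s) + q (v+s))/4 + q ((u+v)/2+s)/2) := by ring_nf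
      refine step.trans_eq ?_
      rw [intervalIntegral.integral_const_mul]
      congr 1
      rw [integral_add (((hcompInt q hqc u hu1 hu2).add (hcompInt q hqc v hv1 hv2)).div_const _)
        ((hcompInt q hqc ((u+v)/2) hm1 hm2).div_const _),
        intervalIntegral.integral_div, intervalIntegral.integral_div,
        integral_add (hcompInt q hqc u hu1 hu2) (hcompInt q hqc v hv1 hv2)]
    rw [hFTC u hu1 hu2, hFTC v hv1 hv2, hFTC ((u+v)/2) hm1 hm2] at key
    rw [div_sub_div_same]
    rw [div_le_iff₀ hρ] at *
    calc (∫ s in (v-ρ/2)..(v+ρ/2), P s) - (∫ s in (u-ρ/2)..(u+ρ/2), P s) ≤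
        (v - u) * (((P (u+ρ/2) - P (u-ρ/2)) + (P (v+ρ/2) - P (v-ρ/2)))/4 +
          (P ((u+v)/2+ρ/2) - P ((u+v)/2-ρ/2))/2) := key
      _ = (v - u) * (((P (u+ρ/2) - P (u-ρ/2))/ρ + (P (v+ρ/2) - P (v-ρ/2))/ρ)/4 +
          ((P ((u+v)/2+ρ/2) - P ((u+v)/2-ρ/2))/ρ)/2) * ρ := by field_simp
lemma secdiff {f f' : ℝ → ℝ} {c ρ : ℝ} (hρ : 0 < ρ)
    (hfc : ContinuousOn f (Ioo (c-4*ρ) (c+4*ρ)))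
    (hfd : ∀ t ∈ Ioo (c-4*ρ) (c+4*ρ), HasDerivAt f (f' t) t)
    (hf'c : ContinuousOn f' (Ioo (c-4*ρ) (c+4*ρ)))
    (hstar : ∀ u v, u ∈ Ioo (c-4*ρ) (c+4*ρ) → v ∈ Ioo (c-4*ρ) (c+4*ρ) → u ≤ v →
      f v - f u ≤ (v - u) * ((f' u + f' v)/4 + f' ((u+v)/2)/2)) :
    0 ≤ f' (c-ρ) + f' (c+ρ) - 2 * f' c := by
  obtain ⟨hF1d, hF1c, hg1c, star1⟩ :=
    level_up hρ (by linarith : (c-4*ρ) + ρ < c+4*ρ) hfc hf'c hfd hstar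
  set a1 : ℝ := c-4*ρ+ρ/2 with ha1
  set b1 : ℝ := c+4*ρ-ρ/2 with hb1
  set F1 : ℝ → ℝ := fun t => (∫ s in (t-ρ/2)..(t+ρ/2), f s)/ρ with hF1
  set g1 : ℝ → ℝ := fun t => (f (t+ρ/2) - f (t-ρ/2))/ρ with hg1
  obtain ⟨hF2d, hF2c, hg2c, star2⟩ :=
    level_up (P := F1) (q := g1) hρ (by rw [ha1, hb1]; linarith : a1 + ρ < b1) hF1c hg1c hF1d star1
  set F2 : ℝ → ℝ := fun t => (∫ s in (t-ρ/2)..(t+ρ/2), F1 s)/ρ with hF2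
  set g2 : ℝ → ℝ := fun t => (F1 (t+ρ/2) - F1 (t-ρ/2))/ρ with hg2
  set U2 : Set ℝ := Ioo (a1+ρ/2) (b1-ρ/2) with hU2
  have memU2 : ∀ t : ℝ, c - 3*ρ < t → t < c + 3*ρ → t ∈ U2 := by
    intro t h1 h2
    rw [hU2, ha1, hb1, mem_Ioo]; constructor <;> linarith
  -- derivative of g1
  have hg1d : ∀ t ∈ Ioo a1 b1, HasDerivAt g1 ((f' (t+ρ/2) - f' (t-ρ/2))/ρ) t := by
    intro t ht
    rw [ha1] at ht
    apply HasDerivAt.div_const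
    apply HasDerivAt.sub
    · exact HasDerivAt.comp_add_const t (ρ/2)
        (hfd (t+ρ/2) ⟨by rw [hb1] at ht; linarith [ht.1], by rw [hb1] at ht; linarith [ht.2]⟩)
    · exact HasDerivAt.comp_sub_const t (ρ/2)
        (hfd (t-ρ/2) ⟨by rw [hb1] at ht; linarith [ht.1], by rw [hb1] at ht; linarith [ht.2]⟩)
  -- derivative of g2 : φ
  set φ : ℝ → ℝ := fun t => (g1 (t+ρ/2) - g1 (t-ρ/2))/ρ with hφ
  have hg2d : ∀ t ∈ U2, HasDerivAt g2 (φ t) t := by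
    intro t ht
    rw [hU2] at ht
    apply HasDerivAt.div_const
    apply HasDerivAt.sub
    · exact HasDerivAt.comp_add_const t (ρ/2) (hF1d (t+ρ/2) ⟨by linarith [ht.1], by linarith [ht.2]⟩)
    · exact HasDerivAt.comp_sub_const t (ρ/2) (hF1d (t-ρ/2) ⟨by linarith [ht.1], by linarith [ht.2]⟩)
  set ψ : ℝ → ℝ := fun t => (f' (t+ρ) - 2 * f' t + f' (t-ρ))/ρ^2 with hψ
  have hφd : ∀ t ∈ U2, HasDerivAt φ (ψ t) t := by
    intro t ht
    rw [hU2] at ht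
    have h1 : HasDerivAt (fun s => g1 (s+ρ/2)) ((f' (t+ρ/2+ρ/2) - f' (t+ρ/2-ρ/2))/ρ) t :=
      HasDerivAt.comp_add_const t (ρ/2) (hg1d (t+ρ/2) ⟨by linarith [ht.1], by linarith [ht.2]⟩)
    have h2 : HasDerivAt (fun s => g1 (s-ρ/2)) ((f' (t-ρ/2+ρ/2) - f' (t-ρ/2-ρ/2))/ρ) t :=
      HasDerivAt.comp_sub_const t (ρ/2) (hg1d (t-ρ/2) ⟨by linarith [ht.1], by linarith [ht.2]⟩)
    have := (h1.sub h2).div_const ρ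
    rw [show t+ρ/2+ρ/2 = t+ρ by ring, show t+ρ/2-ρ/2 = t by ring, show t-ρ/2+ρ/2 = t by ring,
      show t-ρ/2-ρ/2 = t-ρ by ring] at this
    refine this.congr_deriv ?_
    rw [hψ]; field_simp; ring
  have hψc : ContinuousOn ψ U2 := by
    rw [hψ, hU2, ha1, hb1]
    apply ContinuousOn.div_const
    apply ContinuousOn.add
    apply ContinuousOn.sub
    · apply hf'c.comp ((continuous_id.add continuous_const).continuousOn)
      intro t ht; simp only [Pi.add_apply, Pi.sub_apply, id_eq]; exact ⟨by linarith [ht.1], by linarith [ht.2]⟩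
    · exact ContinuousOn.mul continuousOn_const
        (hf'c.mono (fun t ht => ⟨by linarith [ht.1], by linarith [ht.2]⟩))
    · apply hf'c.comp ((continuous_id.sub continuous_const).continuousOn)
      intro t ht; simp only [Pi.add_apply, Pi.sub_apply, id_eq]; exact ⟨by linarith [ht.1], by linarith [ht.2]⟩
  -- contradiction setup
  by_contra hneg
  push_neg at hneg
  have hU2open : IsOpen U2 := by rw [hU2]; exact isOpen_Ioo
  have hcU2 : c ∈ U2 := memU2 c (by linarith) (by linarith)
  have hψcneg : ψ c < 0 := by
    rw [hψ]
    apply div_neg_of_neg_of_pos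
    · linarith
    · positivity
  have hψca : ContinuousAt ψ c := hψc.continuousAt (hU2open.mem_nhds hcU2)
  obtain ⟨δ, hδpos, hδ⟩ := Metric.continuousAt_iff.mp hψca (-(ψ c)/2) (by linarith)
  set h : ℝ := min (ρ/2) (δ/2) with hhdef
  have hhpos : 0 < h := lt_min (by linarith) (by linarith)
  have hhρ : h ≤ ρ/2 := min_le_left _ _
  have hhδ : h ≤ δ/2 := min_le_right _ _
  set κ : ℝ := -(ψ c)/2 with hκdef
  have hκpos : 0 < κ := by rw [hκdef]; linarith
  have hball : ∀ t ∈ Icc (c-h) (c+h), ψ t + κ ≤ 0 := by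
    intro t ht
    have hd : dist t c < δ := by
      rw [Real.dist_eq, abs_lt]
      constructor <;> [linarith [ht.1]; linarith [ht.2]]
    have := hδ hd
    rw [Real.dist_eq, abs_lt] at this
    rw [hκdef]
    linarith [this.1, this.2]
  have hIccU2 : Icc (c-h) (c+h) ⊆ U2 := fun t ht =>
    memU2 t (by linarith [ht.1]) (by linarith [ht.2])
  set v : ℝ → ℝ := fun t => g2 t + κ/2*(t-c)^2 with hv
  have hvd : ∀ t ∈ U2, HasDerivAt v (φ t + κ*(t-c)) t := by
    intro t ht
    have h2 : HasDerivAt (fun t => κ/2*(t-c)^2) (κ*(t-c)) t := by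
      have h3 : HasDerivAt (fun t : ℝ => (t-c)^2) ((2:ℕ)*(t-c)^(2-1)*1) t :=
        ((hasDerivAt_id t).sub_const c).pow 2
      have h4 := h3.const_mul (κ/2)
      refine h4.congr_deriv ?_
      push_cast
      ring
    exact (hg2d t ht).add h2
  have hv2d : ∀ t ∈ U2, HasDerivAt (fun t => φ t + κ*(t-c)) (ψ t + κ) t := by
    intro t ht
    have h2 : HasDerivAt (fun t : ℝ => κ*(t-c)) (κ*1) t :=
      ((hasDerivAt_id t).sub_const c).const_mul κ
    have := (hφd t ht).add h2
    refine this.congr_deriv ?_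
    ring
  have hvc : ContinuousOn v (Icc (c-h) (c+h)) := fun t ht =>
    ((hvd t (hIccU2 ht)).continuousAt).continuousWithinAt
  have hconc : ConcaveOn ℝ (Icc (c-h) (c+h)) v := by
    apply concaveOn_of_hasDerivWithinAt2_nonpos (f' := fun t => φ t + κ*(t-c))
      (f'' := fun t => ψ t + κ) (convex_Icc _ _) hvc
    · intro x hx
      rw [interior_Icc] at hx
      exact (hvd x (hIccU2 (Ioo_subset_Icc_self hx))).hasDerivWithinAt
    · intro x hx
      rw [interior_Icc] at hx
      exact (hv2d x (hIccU2 (Ioo_subset_Icc_self hx))).hasDerivWithinAt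
    · intro x hx
      rw [interior_Icc] at hx
      exact hball x (Ioo_subset_Icc_self hx)
  have hvneg : ConvexOn ℝ (Icc (c-h) (c+h)) (fun t => -(v t)) := by
    have := hconc.neg
    exact this
  have hquad := quad_le (show c-h ≤ c+h by linarith) hvneg hvc.neg
  rw [intervalIntegral.integral_neg, show (c-h+(c+h))/2 = c by ring] at hquad
  -- integral computations
  have hg2int : IntervalIntegrable g2 volume (c-h) (c+h) := by
    apply ContinuousOn.intervalIntegrable
    apply hg2c.mono
    rw [uIcc_of_le (by linarith : c-h ≤ c+h)]
    exact hIccU2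
  have hsq : (∫ t in (c-h)..(c+h), (t-c)^2) = 2*h^3/3 := by
    rw [intervalIntegral.integral_comp_sub_right (fun x => x^2) c, integral_pow,
      show c-h-c = -h by ring, show c+h-c = h by ring]
    ring
  have hsplit : (∫ t in (c-h)..(c+h), v t) = (∫ t in (c-h)..(c+h), g2 t) + κ*h^3/3 := by
    rw [hv]
    rw [integral_add hg2int (by
      apply Continuous.intervalIntegrable
      fun_prop)]
    rw [intervalIntegral.integral_const_mul, hsq]
    ring
  have hFTC2 : (∫ t in (c-h)..(c+h), g2 t) = F2 (c+h) - F2 (c-h) := by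
    apply integral_eq_sub_of_hasDerivAt
    · intro t ht
      rw [uIcc_of_le (by linarith : c-h ≤ c+h)] at ht
      exact hF2d t (hIccU2 ht)
    · exact hg2int
  have hstar2 := star2 (c-h) (c+h) (hIccU2 ⟨le_refl _, by linarith⟩)
    (hIccU2 ⟨by linarith, le_refl _⟩) (by linarith)
  rw [show (c-h+(c+h))/2 = c by ring] at hstar2
  -- unfold F2, g2 applications to common form
  rw [hF2] at hFTC2
  simp only [] at hFTC2
  simp only [hv, hg2] at hquad hsplit
  have hkh : 0 < κ * h^3 := by positivity
  nlinarith [hquad, hsplit, hFTC2, hstar2, hkh]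

theorem stmt11 (I : Set ℝ) (hI : I.OrdConnected) (f f' : ℝ → ℝ)
    (hcont : ContinuousOn f I)
    (hderiv : ∀ x ∈ interior I, HasDerivAt f (f' x) x)
    (hcont' : ContinuousOn f' (interior I)) :
    ConvexOn ℝ (interior I) f' ↔
      ∀ a b : ℝ, a ∈ interior I → b ∈ interior I → a < b →
        (f b - f a) / (b - a) ≤
          (1 / 2) * ((f' a + f' b) / 2 + f' ((a + b) / 2)) := by
  have hJo : IsOpen (interior I) := isOpen_interior
  have hIcc : ∀ {u v : ℝ}, u ∈ interior I → v ∈ interior I → Icc u v ⊆ interior I := by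
    intro u v hu hv
    have hsub : Icc u v ⊆ I := hI.out (interior_subset hu) (interior_subset hv)
    have hIoo : Ioo u v ⊆ interior I := by
      rw [← interior_Icc]; exact interior_mono hsub
    intro t ht
    rcases eq_or_lt_of_le ht.1 with rfl | h1
    · exact hu
    rcases eq_or_lt_of_le ht.2 with rfl | h2
    · exact hv
    exact hIoo ⟨h1, h2⟩
  constructor
  · -- forward
    intro hconv a b ha hb hab
    have hsub : Icc a b ⊆ interior I := hIcc ha hb
    have hfint : IntervalIntegrable f' volume a b := by
      apply ContinuousOn.intervalIntegrable
      rw [uIcc_of_le hab.le]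
      exact hcont'.mono hsub
    have hFTC : ∫ t in a..b, f' t = f b - f a := by
      apply integral_eq_sub_of_hasDerivAt
      · intro t ht
        rw [uIcc_of_le hab.le] at ht
        exact hderiv t (hsub ht)
      · exact hfint
    have hq := quad_le hab.le (hconv.subset hsub (convex_Icc a b)) (hcont'.mono hsub)
    rw [hFTC] at hq
    rw [div_le_iff₀ (by linarith : (0:ℝ) < b - a)]
    calc f b - f a ≤ (b-a) * ((f' a + f' b)/4 + f' ((a+b)/2)/2) := hq
      _ = 1/2 * ((f' a + f' b)/2 + f' ((a+b)/2)) * (b-a) := by ring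
  · -- reverse
    intro hyp
    have star_f : ∀ u v, u ∈ interior I → v ∈ interior I → u ≤ v →
        f v - f u ≤ (v-u)*((f' u + f' v)/4 + f' ((u+v)/2)/2) := by
      intro u v hu hv huv
      rcases eq_or_lt_of_le huv with rfl | hlt
      · simp
      · have h := hyp u v hu hv hlt
        rw [div_le_iff₀ (by linarith : (0:ℝ) < v - u)] at h
        calc f v - f u ≤ 1/2 * ((f' u + f' v)/2 + f' ((u+v)/2)) * (v-u) := h
          _ = (v-u)*((f' u + f' v)/4 + f' ((u+v)/2)/2) := by ring
    have key : ∀ u v, u ∈ interior I → v ∈ interior I → u < v → ∀ z ∈ Icc u v,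
        (v-u)*f' z ≤ (v-z)*f' u + (z-u)*f' v := by
      intro u v hu hv huv
      -- margin
      obtain ⟨εu, hεu, hbu⟩ := Metric.isOpen_iff.mp hJo u hu
      obtain ⟨εv, hεv, hbv⟩ := Metric.isOpen_iff.mp hJo v hv
      set η : ℝ := min (εu/2) (εv/2) with hηdef
      have hηpos : 0 < η := lt_min (by linarith) (by linarith)
      have hu' : u - η ∈ interior I := by
        apply hbu
        rw [Metric.mem_ball, Real.dist_eq, abs_lt]
        have : η ≤ εu/2 := min_le_left _ _
        constructor <;> linarith
      have hv' : v + η ∈ interior I := by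
        apply hbv
        rw [Metric.mem_ball, Real.dist_eq, abs_lt]
        have : η ≤ εv/2 := min_le_right _ _
        constructor <;> linarith
      have hη : Icc (u-η) (v+η) ⊆ interior I := hIcc hu' hv'
      have hmid : ∀ t ρ, 0 < ρ → ρ ≤ η/4 → u ≤ t - ρ → t + ρ ≤ v →
          2 * f' t ≤ f' (t-ρ) + f' (t+ρ) := by
        intro t ρ hρ hρ0 h1 h2
        have hsub : Ioo (t-4*ρ) (t+4*ρ) ⊆ interior I := by
          intro s hs
          apply hη
          exact ⟨by linarith [hs.1], by linarith [hs.2]⟩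
        have hsd := secdiff hρ (hcont.mono (fun s hs => interior_subset (hsub hs)))
          (fun s hs => hderiv s (hsub hs)) (hcont'.mono hsub)
          (fun p q hp hq hpq => star_f p q (hsub hp) (hsub hq) hpq)
        linarith [hsd]
      exact fun z hz => chord_of_midsmall (by positivity : (0:ℝ) < η/4)
        (hcont'.mono (hIcc hu hv)) hmid u v le_rfl le_rfl huv z hz
    have claim : ∀ u v, u ∈ interior I → v ∈ interior I → u ≤ v → ∀ a b : ℝ,
        0 ≤ a → 0 ≤ b → a + b = 1 → f' (a*u + b*v) ≤ a * f' u + b * f' v := by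
      intro u v hu hv huv a b ha hb hab
      rcases eq_or_lt_of_le huv with rfl | hlt
      · have : a*u + b*u = u := by linear_combination u * hab
        rw [this]
        have : a * f' u + b * f' u = f' u := by linear_combination (f' u) * hab
        linarith
      · set z : ℝ := a*u + b*v with hzdef
        have hzm : z ∈ Icc u v := by
          constructor
          · rw [hzdef]
            calc u = a*u + b*u := by linear_combination (-u) * hab
              _ ≤ a*u + b*v := add_le_add_right (mul_le_mul_of_nonneg_left hlt.le hb) _
          · rw [hzdef]
            calc a*u + b*v ≤ a*v + b*v := add_le_add_left (mul_le_mul_of_nonneg_left hlt.le ha) _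
              _ = v := by linear_combination v * hab
        have hch := key u v hu hv hlt z hzm
        have e1 : v - z = a*(v-u) := by rw [hzdef]; linear_combination (-v) * hab
        have e2 : z - u = b*(v-u) := by rw [hzdef]; linear_combination u * hab
        rw [e1, e2] at hch
        nlinarith [hch]
    constructor
    · -- convexity of the set
      rw [convex_iff_ordConnected]
      exact ⟨fun u hu v hv => hIcc hu hv⟩
    · intro u hu v hv a b ha hb hab
      simp only [smul_eq_mul]
      rcases le_total u v with h | h
      · exact claim u v hu hv h a b ha hb hab
      · have := claim v u hv hu h b a hb ha (by linarith)
        rw [show b*v + a*u = a*u + b*v by ring] at this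
        linarith
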